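/- Let m > 0, t_f > 0, I0 ∈ (0,1), and let x* ∈ (0, t_f) satisfy I(t_f − x*)·(m − x*) = 1. Then for every y ∈ [0, t_f] with y ≠ x*, one has 𝒟(x*, x*) < 𝒟(y, x*). In other words, x* is a strict global Nash equilibrium of the delay-strategy SI social-distancing game: it is the unique best reply to itself among all delay strategies. -/
import Mathlib


/-- Prevalence function `I(u) = I0 / (I0 + (1 - I0) exp(-u))`. -/
noncomputable def Ifun (I0 u : ℝ) : ℝ := I0 / (I0 + (1 - I0) * Real.exp (-u))

/-- Susceptibility probability `p(x, x̄)`. -/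
noncomputable def pSus (tf I0 x xb : ℝ) : ℝ :=
  ((1 - Ifun I0 (tf - max x xb)) / (1 - I0)) *
    Real.exp (-(Ifun I0 (tf - max x xb)) * max (xb - x) 0)

/-- Restricted disutility `𝒟(x, x̄) = 1 - p(x,x̄)(1 - x/m)`. -/
noncomputable def Dis (m tf I0 x xb : ℝ) : ℝ := 1 - pSus tf I0 x xb * (1 - x / m)

/-- An interior Nash equilibrium `x*` (satisfying `I(t_f - x*)(m - x*) = 1`) is a strict
global Nash equilibrium: the unique best reply to itself among all delay strategies. -/
theorem stmt0 (m tf I0 xstar : ℝ) (hm : 0 < m) (htf : 0 < tf)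
    (hI0 : I0 ∈ Set.Ioo (0:ℝ) 1) (hx : xstar ∈ Set.Ioo 0 tf)
    (heq : Ifun I0 (tf - xstar) * (m - xstar) = 1) :
    ∀ y ∈ Set.Icc (0:ℝ) tf, y ≠ xstar →
      Dis m tf I0 xstar xstar < Dis m tf I0 y xstar := by
  obtain ⟨hI0a, hI0b⟩ := hI0
  obtain ⟨hxa, hxb⟩ := hx
  intro y hy hne
  obtain ⟨hy0, hytf⟩ := hy
  set a := Real.exp (-(tf - xstar)) with ha
  have ha0 : 0 < a := Real.exp_pos _
  have hI0' : 0 < 1 - I0 := by linarith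
  have hd0 : 0 < I0 + (1 - I0) * a := by positivity
  have hceq : Ifun I0 (tf - xstar) = I0 / (I0 + (1 - I0) * a) := rfl
  have hc0 : 0 < Ifun I0 (tf - xstar) := by rw [hceq]; positivity
  have hc1 : Ifun I0 (tf - xstar) < 1 := by
    rw [hceq, div_lt_one hd0]; nlinarith
  have hmx : 0 < m - xstar := by nlinarith
  rcases lt_or_gt_of_ne hne with hlt | hgt
  · -- y < xstar
    have hmaxy : max y xstar = xstar := max_eq_right hlt.le
    have hm2 : max (xstar - y) 0 = xstar - y := max_eq_left (by linarith)
    simp only [Dis, pSus, max_self, hmaxy, hm2, sub_self, mul_zero, Real.exp_zero,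
      mul_one, sub_lt_sub_iff_left]
    set c := Ifun I0 (tf - xstar) with hc
    set E2 := Real.exp (-c * (xstar - y)) with hE2
    have hE2p : 0 < E2 := Real.exp_pos _
    have hδ : 0 < xstar - y := by linarith
    have h1 : c * (xstar - y) + 1 < Real.exp (c * (xstar - y)) :=
      Real.add_one_lt_exp (ne_of_gt (by positivity))
    have h2 : E2 * Real.exp (c * (xstar - y)) = 1 := by
      rw [hE2, ← Real.exp_add]; ring_nf; exact Real.exp_zero
    have key : E2 * (1 - y / m) < 1 - xstar / m := by
      have h3 : c * (E2 * (m - y)) < c * (m - xstar) := by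
        nlinarith [mul_lt_mul_of_pos_left h1 hE2p]
      have h4 : E2 * (m - y) < m - xstar := lt_of_mul_lt_mul_left h3 hc0.le
      have h5 : 1 - y / m = (m - y) / m := by field_simp
      have h6 : 1 - xstar / m = (m - xstar) / m := by field_simp
      rw [h5, h6, ← mul_div_assoc]
      exact div_lt_div_of_pos_right h4 hm
    have hq : 0 < (1 - c) / (1 - I0) := div_pos (by linarith) hI0'
    have := mul_lt_mul_of_pos_left key hq
    linarith [this]
  · -- y > xstar
    have hmaxy : max y xstar = y := max_eq_left hgt.le
    have hm2 : max (xstar - y) 0 = 0 := max_eq_right (by linarith)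
    simp only [Dis, pSus, max_self, hmaxy, hm2, sub_self, mul_zero, Real.exp_zero,
      mul_one, sub_lt_sub_iff_left]
    set b := Real.exp (-(tf - y)) with hb
    have hb0 : 0 < b := Real.exp_pos _
    have hdy0 : 0 < I0 + (1 - I0) * b := by positivity
    set e1 := Real.exp (y - xstar) with he1
    have he1p : 0 < e1 := Real.exp_pos _
    have hbe : b = a * e1 := by rw [hb, ha, he1, ← Real.exp_add]; ring_nf
    have hP : xstar - y + 1 < Real.exp (xstar - y) :=
      Real.add_one_lt_exp (by linarith)
    have he12 : e1 * Real.exp (xstar - y) = 1 := by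
      rw [he1, ← Real.exp_add]; ring_nf; exact Real.exp_zero
    have hP2 : e1 * (1 - (y - xstar)) < 1 := by
      nlinarith [mul_lt_mul_of_pos_left hP he1p]
    have hd_eq : I0 * (m - xstar) = I0 + (1 - I0) * a := by
      have h := heq
      rw [hceq, div_mul_eq_mul_div, div_eq_one_iff_eq (ne_of_gt hd0)] at h
      exact h
    have key : b * (m - y) * (I0 + (1 - I0) * a) <
        a * (m - xstar) * (I0 + (1 - I0) * b) := by
      rw [hbe]
      have hid : a * (m - xstar) * (I0 + (1 - I0) * (a * e1)) -
          a * e1 * (m - y) * (I0 + (1 - I0) * a) =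
          (I0 + (1 - I0) * a) * (a * (1 - e1 * (1 - (y - xstar)))) +
          (a - a * e1) * (I0 * (m - xstar) - (I0 + (1 - I0) * a)) := by ring
      nlinarith [mul_pos (mul_pos hd0 ha0) (by linarith : (0:ℝ) < 1 - e1 * (1 - (y - xstar)))]
    have L : (1 - Ifun I0 (tf - y)) / (1 - I0) * (1 - y / m) =
        (b * (m - y)) / ((I0 + (1 - I0) * b) * m) := by
      rw [show Ifun I0 (tf - y) = I0 / (I0 + (1 - I0) * b) from rfl]
      field_simp
      ring
    have R : (1 - Ifun I0 (tf - xstar)) / (1 - I0) * (1 - xstar / m) =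
        (a * (m - xstar)) / ((I0 + (1 - I0) * a) * m) := by
      rw [hceq]
      field_simp
      ring
    rw [L, R, div_lt_div_iff₀ (by positivity) (by positivity)]
    linarith [mul_lt_mul_of_pos_right key hm]
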